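/- Let p be a prime number with p ≡ 1 (mod 4), and let F be a number field of degree 2 over ℚ containing an element α with α² = p. Then there exists a unit u of the ring of integers 𝒪_F whose norm N_{F/ℚ}(u) equals −1. -/

import Mathlib

open Polynomial IntermediateField

open Polynomial IntermediateField

lemma no_rat_sqrt (p : ℕ) (hp : p.Prime) (r : ℚ) : r ^ 2 ≠ (p : ℚ) := by
  intro h
  have h1 : Irrational (Real.sqrt p) := hp.irrational_sqrt
  have h2 : ¬ IsSquare ((p : ℕ) : ℚ) := by
    rw [← irrational_sqrt_ratCast_iff_of_nonneg (by positivity)]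
    simpa using h1
  exact h2 ⟨r, by rw [← h]; ring⟩

lemma norm_formula (p : ℕ) (hp : p.Prime)
    (F : Type*) [Field F] [NumberField F] (hdeg : Module.finrank ℚ F = 2)
    (α : F) (hα : α ^ 2 = (p : F)) (a b : ℚ) (hb : b ≠ 0) :
    Algebra.norm ℚ (algebraMap ℚ F a + algebraMap ℚ F b * α) = a ^ 2 - p * b ^ 2 := by
  set x : F := algebraMap ℚ F a + algebraMap ℚ F b * α with hx
  have hxint : IsIntegral ℚ x := IsIntegral.of_finite ℚ x
  set q : ℚ[X] := (X - C a) ^ 2 - C ((p : ℚ) * b ^ 2) with hq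
  have hdegXa : ((X - C a) ^ 2 : ℚ[X]).degree = 2 := by
    rw [degree_pow, degree_X_sub_C]; rfl
  have hqmonic : q.Monic := by
    apply ((monic_X_sub_C a).pow 2).sub_of_left
    rw [hdegXa]
    exact lt_of_le_of_lt (degree_C_le) (by norm_num)
  have hqdeg : q.natDegree = 2 := by
    rw [hq, natDegree_sub_C, natDegree_pow, natDegree_X_sub_C]
  have hpF : (algebraMap ℚ F) ((p : ℚ)) = (p : F) := by push_cast; simp
  have haev : Polynomial.aeval x q = 0 := by
    simp only [hq, map_sub, map_pow, aeval_X, aeval_C, hpF]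
    have : x - algebraMap ℚ F a = algebraMap ℚ F b * α := by rw [hx]; ring
    rw [this, mul_pow, hα]
    rw [map_mul, map_pow]
    push_cast
    ring
  have hdvd : minpoly ℚ x ∣ q := minpoly.dvd ℚ x haev
  have hxnr : x ∉ (algebraMap ℚ F).range := by
    rintro ⟨s, hs⟩
    have hb' : (algebraMap ℚ F) b ≠ 0 := by
      simpa using hb
    have hαeq : algebraMap ℚ F ((s - a) / b) = α := by
      rw [map_div₀, map_sub, hs, hx, add_sub_cancel_left]
      exact mul_div_cancel_left₀ α hb'
    apply no_rat_sqrt p hp ((s - a) / b)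
    apply (algebraMap ℚ F).injective
    rw [map_pow, hαeq, hα, hpF]
  have h2le : 2 ≤ (minpoly ℚ x).natDegree := by
    rw [minpoly.two_le_natDegree_iff hxint]
    exact hxnr
  have hle : (minpoly ℚ x).natDegree ≤ 2 := by
    have := Polynomial.natDegree_le_of_dvd hdvd hqmonic.ne_zero
    omega
  have hmdeg : (minpoly ℚ x).natDegree = 2 := le_antisymm hle h2le
  have hm := minpoly.monic hxint
  have hmq : minpoly ℚ x = q := by
    obtain ⟨c, hc⟩ := hdvd
    have hc0 : c ≠ 0 := by
      rintro rfl
      rw [mul_zero] at hc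
      exact hqmonic.ne_zero hc
    have hdegc : c.natDegree = 0 := by
      have h := Polynomial.natDegree_mul hm.ne_zero hc0
      rw [← hc, hqdeg, hmdeg] at h
      omega
    have hclead : c.coeff 0 = 1 := by
      have h := Polynomial.leadingCoeff_mul (minpoly ℚ x) c
      rw [← hc, hqmonic.leadingCoeff, hm.leadingCoeff, one_mul] at h
      rw [← hdegc]
      exact h.symm
    have hc1 : c = 1 := by
      rw [Polynomial.eq_C_of_natDegree_eq_zero hdegc, hclead, map_one]
    rw [hc, hc1, mul_one]
  rw [Algebra.norm_eq_norm_adjoin ℚ x]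
  have hfr : Module.finrank ℚ (ℚ⟮x⟯ : IntermediateField ℚ F) = 2 := by
    rw [IntermediateField.adjoin.finrank hxint, hmdeg]
  have htower : Module.finrank ℚ (ℚ⟮x⟯ : IntermediateField ℚ F) *
      Module.finrank (ℚ⟮x⟯ : IntermediateField ℚ F) F = 2 := by
    rw [Module.finrank_mul_finrank, hdeg]
  have h1 : Module.finrank (ℚ⟮x⟯ : IntermediateField ℚ F) F = 1 := by
    rw [hfr] at htower; omega
  rw [h1, pow_one]
  rw [← IntermediateField.adjoin.powerBasis_gen hxint,
    Algebra.PowerBasis.norm_gen_eq_coeff_zero_minpoly,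
    IntermediateField.adjoin.powerBasis_gen hxint, IntermediateField.minpoly_gen, hmq]
  have hdim : (IntermediateField.adjoin.powerBasis hxint).dim = 2 := by
    show (minpoly ℚ x).natDegree = 2
    exact hmdeg
  rw [hdim]
  have hcoeff : q.coeff 0 = a ^ 2 - (p : ℚ) * b ^ 2 := by
    rw [coeff_zero_eq_eval_zero, hq]
    simp
  rw [hcoeff]
  ring

set_option maxHeartbeats 1000000 in
lemma neg_pell (p : ℕ) (hp : p.Prime) (hp4 : p % 4 = 1) :
    ∃ a b : ℤ, b ≠ 0 ∧ a ^ 2 - (p : ℤ) * b ^ 2 = -1 := by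
  have hp5 : 5 ≤ p := by
    have h2 := hp.two_le
    omega
  have hppos : (0 : ℤ) < (p : ℤ) := by exact_mod_cast hp.pos
  have hp4' : (p : ℤ) % 4 = 1 := by omega
  have hns : ¬ IsSquare ((p : ℤ)) := by
    rintro ⟨k, hk⟩
    have : (k.natAbs) * (k.natAbs) = p := by
      have := congrArg Int.natAbs hk
      simpa [Int.natAbs_mul] using this.symm
    rcases hp.eq_one_or_self_of_dvd k.natAbs ⟨k.natAbs, this.symm⟩ with h1 | h1
    · rw [h1] at this; omega
    · rw [h1] at this; nlinarith
  obtain ⟨x₀, y₀, hxy₀, hy₀⟩ := Pell.exists_of_not_isSquare hppos hns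
  -- minimal solution
  have hP : ∃ n : ℕ, ∃ x y : ℤ, 0 ≤ x ∧ x.natAbs = n ∧ x ^ 2 - (p : ℤ) * y ^ 2 = 1 ∧ y ≠ 0 := by
    refine ⟨(|x₀|).natAbs, |x₀|, y₀, abs_nonneg _, rfl, ?_, hy₀⟩
    rw [sq_abs]; exact hxy₀
  classical
  obtain ⟨x, y, hx0, hxn, heq, hy⟩ := Nat.find_spec hP
  have hmin : ∀ c d : ℤ, 0 ≤ c → c.natAbs < x.natAbs → c ^ 2 - (p : ℤ) * d ^ 2 = 1 → d = 0 := by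
    intro c d hc hlt hcd
    by_contra hd
    exact Nat.find_min hP (hxn ▸ hlt) ⟨c, d, hc, rfl, hcd, hd⟩
  clear hxn hP hxy₀ hy₀
  have hy1 : 1 ≤ y ^ 2 := by
    have := sq_nonneg y
    rcases lt_or_eq_of_le this with h | h
    · omega
    · exact absurd (pow_eq_zero_iff (n := 2) (by norm_num) |>.mp h.symm) hy
  have hx3 : 3 ≤ x := by
    nlinarith [sq_nonneg (x - 3), sq_nonneg x]
  -- parity
  obtain ⟨k, hk⟩ : ∃ k, x = 2 * k + 1 := by
    rcases Int.even_or_odd x with ⟨k, hk⟩ | ⟨k, hk⟩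
    · exfalso
      rcases Int.even_or_odd y with ⟨m, hm⟩ | ⟨m, hm⟩
      · have h4 : (4 : ℤ) ∣ 1 := ⟨k ^ 2 - (p : ℤ) * m ^ 2, by subst hk hm; ring_nf; ring_nf at heq; linarith⟩
        norm_num at h4
      · have : (p : ℤ) = 4 * (k ^ 2 - (p : ℤ) * m ^ 2 - (p : ℤ) * m) - 1 := by
          subst hk hm; nlinarith [heq]
        omega
    · exact ⟨k, by omega⟩
  obtain ⟨m, hm⟩ : ∃ m, y = 2 * m := by
    rcases Int.even_or_odd y with ⟨m, hm⟩ | ⟨m, hm⟩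
    · exact ⟨m, by omega⟩
    · exfalso
      have : (p : ℤ) = 4 * (k ^ 2 + k - (p : ℤ) * m ^ 2 - (p : ℤ) * m) := by
        subst hk hm; nlinarith [heq]
      omega
  have hk1 : 1 ≤ k := by omega
  have hm0 : m ≠ 0 := by rintro rfl; simp at hm; exact hy hm
  have hkey : k * (k + 1) = (p : ℤ) * m ^ 2 := by subst hk hm; nlinarith [heq]
  have hcop : IsCoprime k (k + 1) := ⟨-1, 1, by ring⟩
  have hpdvd : (p : ℤ) ∣ k * (k + 1) := ⟨m ^ 2, hkey⟩
  have hpprime : Prime ((p : ℤ)) := Int.prime_iff_natAbs_prime.mpr (by simpa using hp)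
  rcases hpprime.dvd_mul.mp hpdvd with hdk | hdk1
  · -- p ∣ k : leads to smaller solution, contradiction
    exfalso
    obtain ⟨k', hk'⟩ := hdk
    have hk'pos : 1 ≤ k' := by nlinarith
    have hkey' : k' * (k + 1) = m ^ 2 := by
      have : (p : ℤ) * (k' * (k + 1)) = (p : ℤ) * m ^ 2 := by rw [← hkey, hk']; ring
      exact mul_left_cancel₀ (by positivity) this
    have hcop' : IsCoprime k' (k + 1) := hcop.of_isCoprime_of_dvd_left ⟨(p : ℤ), by rw [hk']; ring⟩
    have hkey'' : (k + 1) * k' = m ^ 2 := by rw [mul_comm]; exact hkey'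
    obtain ⟨a, ha⟩ := Int.sq_of_isCoprime hcop' hkey'
    obtain ⟨c, hc⟩ := Int.sq_of_isCoprime hcop'.symm hkey''
    have ha' : k' = a ^ 2 := by
      rcases ha with h | h
      · exact h
      · nlinarith [sq_nonneg a]
    have hc' : k + 1 = c ^ 2 := by
      rcases hc with h | h
      · exact h
      · nlinarith [sq_nonneg c]
    have hsol : c ^ 2 - (p : ℤ) * a ^ 2 = 1 := by rw [← ha', ← hc', hk']; ring
    have ha0 : a ≠ 0 := by rintro rfl; simp at ha'; omega
    have hclt : c ^ 2 < x ^ 2 := by nlinarith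
    have hlt : (|c|).natAbs < x.natAbs := by
      have h1 : (|c|).natAbs = c.natAbs := Int.natAbs_abs c
      rw [h1, Int.natAbs_lt_iff_sq_lt]
      exact hclt
    exact ha0 (hmin (|c|) a (abs_nonneg _) hlt (by rw [sq_abs]; exact hsol))
  · -- p ∣ k + 1 : gives norm -1
    obtain ⟨v', hv'⟩ := hdk1
    have hv'pos : 1 ≤ v' := by nlinarith
    have hkey' : k * v' = m ^ 2 := by
      have : (p : ℤ) * (k * v') = (p : ℤ) * m ^ 2 := by rw [← hkey, hv']; ring
      exact mul_left_cancel₀ (by positivity) this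
    have hcop' : IsCoprime k v' := hcop.of_isCoprime_of_dvd_right ⟨(p : ℤ), by rw [hv']; ring⟩
    have hkey'' : v' * k = m ^ 2 := by rw [mul_comm]; exact hkey'
    obtain ⟨a, ha⟩ := Int.sq_of_isCoprime hcop' hkey'
    obtain ⟨b, hb⟩ := Int.sq_of_isCoprime hcop'.symm hkey''
    have ha' : k = a ^ 2 := by
      rcases ha with h | h
      · exact h
      · nlinarith [sq_nonneg a]
    have hb' : v' = b ^ 2 := by
      rcases hb with h | h
      · exact h
      · nlinarith [sq_nonneg b]
    have hb0 : b ≠ 0 := by rintro rfl; simp at hb'; omega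
    exact ⟨a, b, hb0, by rw [← ha', ← hb', ← hv']; ring⟩

/-- If `p ≡ 1 (mod 4)` is prime and `F` is a quadratic number field containing a square root
of `p`, then the ring of integers of `F` has a unit of norm `-1`. -/
theorem exists_unit_norm_neg_one (p : ℕ) (hp : p.Prime) (hp4 : p % 4 = 1)
    (F : Type*) [Field F] [NumberField F] (hdeg : Module.finrank ℚ F = 2)
    (α : F) (hα : α ^ 2 = (p : F)) :
    ∃ u : (NumberField.RingOfIntegers F)ˣ,
      Algebra.norm ℚ ((u : NumberField.RingOfIntegers F) : F) = -1 := by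
  obtain ⟨a, b, hb, hab⟩ := neg_pell p hp hp4
  have hαint : IsIntegral ℤ α := by
    refine ⟨X ^ 2 - C ((p : ℤ)), ?_, ?_⟩
    · apply monic_X_pow_sub_C _ (by norm_num)
    · simp [hα]
  have hint : ∀ s t : ℤ, IsIntegral ℤ ((s : F) + (t : F) * α) := by
    intro s t
    have hs : IsIntegral ℤ ((s : F)) := by
      have := isIntegral_algebraMap (R := ℤ) (A := F) (x := s)
      simpa using this
    have ht : IsIntegral ℤ ((t : F)) := by
      have := isIntegral_algebraMap (R := ℤ) (A := F) (x := t)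
      simpa using this
    exact hs.add (ht.mul hαint)
  -- build the unit
  set β : NumberField.RingOfIntegers F := ⟨(a : F) + (b : F) * α, hint a b⟩ with hβ
  set γ : NumberField.RingOfIntegers F := ⟨(-a : F) + (b : F) * α, by
    have := hint (-a) b; simpa [mem_integralClosure_iff] using this⟩ with hγ
  have hkey : ((a : F) + (b : F) * α) * (-(a : F) + (b : F) * α) = 1 := by
    have expand : ((a : F) + (b : F) * α) * (-(a : F) + (b : F) * α)
        = (b : F) ^ 2 * α ^ 2 - (a : F) ^ 2 := by ring
    rw [expand, hα]
    have h2 : ((b : F)) ^ 2 * ((p : F)) - ((a : F)) ^ 2 = ((-(a ^ 2 - (p : ℤ) * b ^ 2) : ℤ) : F) := by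
      push_cast; ring
    rw [h2, hab]
    norm_num
  have hprod : β * γ = 1 := by
    apply NumberField.RingOfIntegers.ext
    exact hkey
  refine ⟨⟨β, γ, hprod, by rw [mul_comm]; exact hprod⟩, ?_⟩
  have hcoe : ((β : NumberField.RingOfIntegers F) : F) = (a : F) + (b : F) * α := rfl
  show Algebra.norm ℚ ((β : F)) = -1
  have hcast : ((β : F)) = algebraMap ℚ F ((a : ℚ)) + algebraMap ℚ F ((b : ℚ)) * α := by
    rw [hcoe]; push_cast; simp
  rw [hcast, norm_formula p hp F hdeg α hα (a : ℚ) (b : ℚ) (by exact_mod_cast hb)]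
  have : ((a : ℚ)) ^ 2 - (p : ℚ) * ((b : ℚ)) ^ 2 = ((a ^ 2 - (p : ℤ) * b ^ 2 : ℤ) : ℚ) := by
    push_cast; ring
  rw [this, hab]
  norm_num
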